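/- Let $(X, d)$ and $(X', d')$ be metric spaces with $X'$ locally path connected, let $D \subseteq X$ be open, let $G$ be an open set whose closure $K = \overline{G}$ is a compact subset of $D$, let $n \geq 1$ be a real number, and let $\delta > 0$, $a > 0$. Suppose $f_m : D \to X'$, $m = 1, 2, \ldots$, is a sequence of homeomorphisms of $D$ onto open subsets of $X'$ such that $d'(f_m(x), f_m(y)) \geq \frac{\delta}{2}\exp\{-a/d^n(x, y)\}$ for all $x, y \in K$ with $x \neq y$ and all $m$, and suppose $f_m$ converges locally uniformly on $D$ to a map $f : D \to X'$. Then $f|_G$ is an open map, i.e., $f(A)$ is open in $X'$ for every open set $A \subseteq G$. -/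

import Mathlib

open Set Metric Filter Topology

/-- An embedding of a subtype `D` with open image maps open subsets of `D` to open sets. -/
lemma aux_image_open {X X' : Type*} [TopologicalSpace X] [TopologicalSpace X']
    {D : Set X} {g : X → X'} (hemb : Topology.IsEmbedding (fun x : D => g x))
    (him : IsOpen (g '' D)) {S : Set X} (hS : IsOpen S) (hSD : S ⊆ D) :
    IsOpen (g '' S) := by
  have hrange : Set.range (fun x : D => g x) = g '' D := Set.range_restrict g D
  have hopenmap : IsOpenMap (fun x : D => g x) :=
    hemb.isInducing.isOpenMap (by rw [hrange]; exact him)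
  have himg : g '' S = (fun x : D => g x) '' (Subtype.val ⁻¹' S) := by
    ext y
    constructor
    · rintro ⟨x, hxS, rfl⟩
      exact ⟨⟨x, hSD hxS⟩, hxS, rfl⟩
    · rintro ⟨⟨x, hxD⟩, hxS, rfl⟩
      exact ⟨x, hxS, rfl⟩
  rw [himg]
  exact hopenmap _ (continuous_subtype_val.isOpen_preimage _ hS)

set_option maxHeartbeats 2000000 in
/-- In metric spaces with `X'` locally path connected, the locally
uniform limit of homeomorphisms of `D` onto open subsets of `X'` satisfying the
lower distance bound on `K = closure G` is an open map on `G`. -/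
theorem limit_open_map_metric {X X' : Type*} [MetricSpace X] [MetricSpace X']
    [LocallyPathConnectedSpace X']
    (D G : Set X) (hDopen : IsOpen D) (hGopen : IsOpen G)
    (hKcompact : IsCompact (closure G)) (hKD : closure G ⊆ D)
    (n : ℝ) (hn : 1 ≤ n) (δ a : ℝ) (hδ : 0 < δ) (ha : 0 < a)
    (f : ℕ → X → X')
    (hhomeo : ∀ m : ℕ, Topology.IsEmbedding (fun x : D => f m x) ∧ IsOpen (f m '' D))
    (hlow : ∀ m : ℕ, ∀ x ∈ closure G, ∀ y ∈ closure G, x ≠ y →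
      δ / 2 * Real.exp (-a / dist x y ^ n) ≤ dist (f m x) (f m y))
    (F : X → X')
    (hconv : TendstoLocallyUniformlyOn (fun m => f m) F Filter.atTop D) :
    ∀ A : Set X, A ⊆ G → IsOpen A → IsOpen (F '' A) := by
  intro A hAG hAopen
  have hfmc : ∀ m, ContinuousOn (f m) D := fun m =>
    continuousOn_iff_continuous_restrict.mpr (hhomeo m).1.continuous
  have hFc : ContinuousOn F D := hconv.continuousOn (Filter.Frequently.of_forall hfmc)
  rw [isOpen_iff_forall_mem_open]
  rintro y₀ ⟨x₀, hx₀A, rfl⟩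
  obtain ⟨r, hr0, hrA⟩ : ∃ r > 0, Metric.closedBall x₀ r ⊆ A := by
    obtain ⟨ε, hε, h⟩ := Metric.isOpen_iff.mp hAopen x₀ hx₀A
    exact ⟨ε / 2, by positivity, (Metric.closedBall_subset_ball (by linarith)).trans h⟩
  have hBK : Metric.closedBall x₀ r ⊆ closure G := fun x hx => subset_closure (hAG (hrA hx))
  have hBD : Metric.closedBall x₀ r ⊆ D := hBK.trans hKD
  have hx₀B : x₀ ∈ Metric.closedBall x₀ r := Metric.mem_closedBall_self hr0.le
  have hx₀D : x₀ ∈ D := hBD hx₀B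
  have hK₀c : IsCompact (Metric.closedBall x₀ r) :=
    hKcompact.of_isClosed_subset Metric.isClosed_closedBall hBK
  set ε := δ / 2 * Real.exp (-a / r ^ n) with hεdef
  have hε0 : 0 < ε := by positivity
  -- lower bound on sphere for each fₘ
  have hsm : ∀ m, ∀ y ∈ Metric.sphere x₀ r, ε ≤ dist (f m x₀) (f m y) := by
    intro m y hy
    have hd : dist x₀ y = r := by rw [dist_comm]; exact hy
    have hne : x₀ ≠ y := by
      intro h; rw [h, dist_self] at hd; exact hr0.ne hd
    have := hlow m x₀ (hBK hx₀B) y (hBK (Metric.sphere_subset_closedBall hy)) hne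
    rwa [hd] at this
  have hpt : ∀ x ∈ D, Filter.Tendsto (fun m => f m x) Filter.atTop (𝓝 (F x)) :=
    fun x hx => hconv.tendsto_at hx
  -- lower bound on sphere for F
  have hsF : ∀ y ∈ Metric.sphere x₀ r, ε ≤ dist (F x₀) (F y) := by
    intro y hy
    have h1 : Filter.Tendsto (fun m => dist (f m x₀) (f m y)) Filter.atTop
        (𝓝 (dist (F x₀) (F y))) :=
      (hpt x₀ hx₀D).dist (hpt y (hBD (Metric.sphere_subset_closedBall hy)))
    exact ge_of_tendsto' h1 (fun m => hsm m y hy)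
  have hUc : TendstoUniformlyOn (fun m => f m) F Filter.atTop (Metric.closedBall x₀ r) :=
    (tendstoLocallyUniformlyOn_iff_tendstoUniformlyOn_of_compact hK₀c).mp (hconv.mono hBD)
  set U := pathComponentIn (Metric.ball (F x₀) (ε / 3)) (F x₀) with hUdef
  have hUopen : IsOpen U := Metric.isOpen_ball.pathComponentIn _
  have hx₀U : F x₀ ∈ U := mem_pathComponentIn_self (Metric.mem_ball_self (by positivity))
  have hUball : U ⊆ Metric.ball (F x₀) (ε / 3) := pathComponentIn_subset
  refine ⟨U, ?_, hUopen, hx₀U⟩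
  intro y' hy'
  have hev1 : ∀ᶠ m in Filter.atTop, f m x₀ ∈ U :=
    (hpt x₀ hx₀D).eventually_mem (hUopen.mem_nhds hx₀U)
  have hev2 : ∀ᶠ m in Filter.atTop, ∀ x ∈ Metric.closedBall x₀ r, dist (F x) (f m x) < ε / 3 :=
    Metric.tendstoUniformlyOn_iff.mp hUc (ε / 3) (by positivity)
  have hev : ∀ᶠ m in Filter.atTop, y' ∈ f m '' Metric.ball x₀ r := by
    filter_upwards [hev1, hev2] with m hm1 hm2
    set V := f m '' Metric.ball x₀ r with hVdef
    have hVopen : IsOpen V :=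
      aux_image_open (hhomeo m).1 (hhomeo m).2 Metric.isOpen_ball
        (Metric.ball_subset_closedBall.trans hBD)
    have hVK : IsCompact (f m '' Metric.closedBall x₀ r) :=
      hK₀c.image_of_continuousOn ((hfmc m).mono hBD)
    have hclosure : closure V ⊆ f m '' Metric.closedBall x₀ r :=
      closure_minimal (Set.image_mono Metric.ball_subset_closedBall) hVK.isClosed
    have hfr : frontier V ⊆ f m '' Metric.sphere x₀ r := by
      intro w hw
      rw [hVopen.frontier_eq] at hw
      obtain ⟨hw1, hw2⟩ := hw
      obtain ⟨p, hp, rfl⟩ := hclosure hw1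
      refine ⟨p, ?_, rfl⟩
      have hpball : p ∉ Metric.ball x₀ r := fun h => hw2 ⟨p, h, rfl⟩
      rw [Metric.mem_closedBall] at hp
      rw [Metric.mem_ball, not_lt] at hpball
      exact le_antisymm hp hpball
    -- U misses the frontier of V
    have hUfr : ∀ w ∈ U, w ∉ frontier V := by
      intro w hwU hwfr
      obtain ⟨p, hp, rfl⟩ := hfr hwfr
      have h1 : ε ≤ dist (f m x₀) (f m p) := hsm m p hp
      have h2 : dist (F x₀) (f m x₀) < ε / 3 := hm2 x₀ hx₀B
      have h3 : dist (f m p) (F x₀) < ε / 3 := by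
        have := hUball hwU
        rw [Metric.mem_ball] at this
        exact this
      have h4 : dist (f m x₀) (f m p) ≤ dist (f m x₀) (F x₀) + dist (F x₀) (f m p) :=
        dist_triangle _ _ _
      rw [dist_comm (f m x₀) (F x₀)] at h4
      rw [dist_comm (f m p) (F x₀)] at h3
      linarith
    have hsub : U ⊆ V ∪ (closure V)ᶜ := by
      intro w hw
      by_cases h : w ∈ closure V
      · left
        by_contra hVw
        exact hUfr w hw (by rw [hVopen.frontier_eq]; exact ⟨h, hVw⟩)
      · right; exact h
    have hUV : U ⊆ V := by
      refine IsPreconnected.subset_left_of_subset_union hVopen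
        isClosed_closure.isOpen_compl ?_ hsub ⟨f m x₀, hm1, ?_⟩ ?_
      · exact Set.disjoint_left.mpr fun w hwV hwc => hwc (subset_closure hwV)
      · exact Set.mem_image_of_mem _ (Metric.mem_ball_self hr0)
      · exact (isPathConnected_pathComponentIn
          (Metric.mem_ball_self (by positivity : (0:ℝ) < ε / 3))).isConnected.isPreconnected
    exact hUV hy'
  obtain ⟨N, hN⟩ := Filter.eventually_atTop.mp hev
  have hex : ∀ k : ℕ, ∃ z, z ∈ Metric.ball x₀ r ∧ f (k + N) z = y' := fun k =>
    hN (k + N) (Nat.le_add_left N k)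
  choose x hx1 hx2 using hex
  obtain ⟨z, hzK, φ, hφ, hlim⟩ :=
    hK₀c.tendsto_subseq (fun k => Metric.ball_subset_closedBall (hx1 k))
  have hzD : z ∈ D := hBD hzK
  -- the subsequence of functions also converges uniformly
  have htendφ : Filter.Tendsto (fun k => φ k + N) Filter.atTop Filter.atTop :=
    Filter.tendsto_atTop_mono (fun k => Nat.le_add_right (φ k) N) hφ.tendsto_atTop
  have hUc' : TendstoUniformlyOn (fun k => f (φ k + N)) F Filter.atTop
      (Metric.closedBall x₀ r) := fun V hV => htendφ.eventually (hUc V hV)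
  have hglim : Filter.Tendsto (fun k => x (φ k)) Filter.atTop
      (𝓝[Metric.closedBall x₀ r] z) := by
    rw [tendsto_nhdsWithin_iff]
    exact ⟨hlim, Filter.Eventually.of_forall fun k => Metric.ball_subset_closedBall (hx1 (φ k))⟩
  have hcomp : Filter.Tendsto (fun k => f (φ k + N) (x (φ k))) Filter.atTop (𝓝 (F z)) :=
    hUc'.tendsto_comp ((hFc z hzD).mono hBD) hglim
  have hconst : Filter.Tendsto (fun _ : ℕ => y') Filter.atTop (𝓝 (F z)) := by
    simpa only [hx2] using hcomp
  have hyF : y' = F z := tendsto_nhds_unique tendsto_const_nhds hconst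
  have hzball : z ∈ Metric.ball x₀ r := by
    rw [Metric.mem_ball]
    rcases lt_or_eq_of_le (Metric.mem_closedBall.mp hzK) with h | h
    · exact h
    · exfalso
      have h1 : ε ≤ dist (F x₀) (F z) := hsF z (Metric.mem_sphere.mpr h)
      have h2 : dist y' (F x₀) < ε / 3 := Metric.mem_ball.mp (hUball hy')
      rw [← hyF, dist_comm] at h1
      linarith
  exact ⟨z, hrA (Metric.ball_subset_closedBall hzball), hyF.symm⟩
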